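/- arXiv:2210.07944 — 3 statements merged into one kernel-verified Lean document; each statement's English description precedes it below -/
import Mathlib

section
/- Let (X,d) be a compact metric G-space and let f : X → X be a continuous equivariant map. Then f is chaotic in the sense of G-Li-Yorke if and only if for every positive integer N the map f^N is chaotic in the sense of G-Li-Yorke. -/
open Filter Topology
open ENNReal

/-- `(x, y)` is a G-Li-Yorke pair for `f`: there is a sequence `(gₙ)` in `G` with
`liminf d(gₙ·fⁿ(x), gₙ·fⁿ(y)) = 0` and `limsup d(gₙ·fⁿ(x), gₙ·fⁿ(y)) > 0`
(distances computed in `[0,∞]` via `edist`, which agrees with the metric `d`). -/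
def GLiYorkePair (G : Type*) {X : Type*} [MetricSpace X] [Group G] [MulAction G X]
    (f : X → X) (x y : X) : Prop :=
  ∃ g : ℕ → G,
    liminf (fun n => edist (g n • f^[n] x) (g n • f^[n] y)) atTop = 0 ∧
    0 < limsup (fun n => edist (g n • f^[n] x) (g n • f^[n] y)) atTop

/-- `f` is chaotic in the sense of G-Li-Yorke: there is an uncountable set all of whose
pairs of distinct points are G-Li-Yorke pairs for `f`. -/
def GLiYorkeChaotic (G : Type*) {X : Type*} [MetricSpace X] [Group G] [MulAction G X]
    (f : X → X) : Prop :=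
  ∃ S : Set X, ¬ S.Countable ∧ ∀ x ∈ S, ∀ y ∈ S, x ≠ y → GLiYorkePair G f x y

section Aux

variable {X G : Type*} [MetricSpace X] [Group G] [MulAction G X]

omit [MetricSpace X] in
lemma iter_eqv (f : X → X) (heq : ∀ (g : G) (x : X), f (g • x) = g • f x) :
    ∀ (j : ℕ) (g : G) (z : X), f^[j] (g • z) = g • f^[j] z := by
  intro j
  induction j with
  | zero => intro g z; simp
  | succ j ih => intro g z; rw [Function.iterate_succ_apply, heq, ih, ← Function.iterate_succ_apply]

omit [Group G] [MulAction G X] in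
lemma uc_iter [CompactSpace X] (f : X → X) (hf : Continuous f) (N : ℕ)
    {ε : ℝ≥0∞} (hε : 0 < ε) :
    ∃ δ : ℝ≥0∞, 0 < δ ∧ ∀ j ≤ N, ∀ u v : X, edist u v < δ →
      edist (f^[j] u) (f^[j] v) < ε := by
  induction N with
  | zero =>
    refine ⟨ε, hε, fun j hj u v h => ?_⟩
    obtain rfl := Nat.le_zero.mp hj
    simpa using h
  | succ N ih =>
    obtain ⟨δ₁, hδ₁, H1⟩ := ih
    have huc : UniformContinuous (f^[N+1]) :=
      CompactSpace.uniformContinuous_of_continuous (hf.iterate (N+1))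
    obtain ⟨δ₂, hδ₂, H2⟩ := EMetric.uniformContinuous_iff.mp huc ε hε
    refine ⟨min δ₁ δ₂, lt_min hδ₁ hδ₂, fun j hj u v h => ?_⟩
    rcases Nat.lt_succ_iff_lt_or_eq.mp (Nat.lt_succ_of_le hj) with hj' | rfl
    · exact H1 j (Nat.lt_succ_iff.mp hj') u v (h.trans_le (min_le_left _ _))
    · exact H2 (h.trans_le (min_le_right _ _))

lemma pair_transfer [CompactSpace X]
    (f : X → X) (hf : Continuous f)
    (heq : ∀ (g : G) (x : X), f (g • x) = g • f x)
    (N : ℕ) (hN : 0 < N) (x y : X)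
    (hp : GLiYorkePair G f x y) : GLiYorkePair G (f^[N]) x y := by
  classical
  obtain ⟨g, hli, hls⟩ := hp
  set D : ℕ → G → ℝ≥0∞ :=
    fun m a => edist (a • (f^[N])^[m] x) (a • (f^[N])^[m] y) with hD
  have hDit : ∀ (m : ℕ) (a : G), D m a = edist (a • f^[N*m] x) (a • f^[N*m] y) := by
    intro m a
    rw [hD]
    simp only [Function.iterate_mul]
  -- small values
  have small : ∀ (k M : ℕ), ∃ p : ℕ × G, M ≤ p.1 ∧ D p.1 p.2 < ((k : ℝ≥0∞) + 1)⁻¹ := by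
    intro k M
    have hεpos : (0 : ℝ≥0∞) < ((k : ℝ≥0∞) + 1)⁻¹ := by
      apply ENNReal.inv_pos.mpr
      exact (ENNReal.add_lt_top.mpr ⟨ENNReal.natCast_lt_top k, ENNReal.one_lt_top⟩).ne
    obtain ⟨δ', hδ'pos, hδ'⟩ := uc_iter f hf N hεpos
    have hfreq : ∃ᶠ n in atTop,
        edist (g n • f^[n] x) (g n • f^[n] y) < δ' :=
      frequently_lt_of_liminf_lt (by isBoundedDefault) (by rw [hli]; exact hδ'pos)
    obtain ⟨n, hn1, hn2⟩ := (hfreq.and_eventually (eventually_ge_atTop (N * M))).exists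
    set m := n / N + 1 with hm
    set j := N - n % N with hj
    have hdm : N * (n / N) + n % N = n := Nat.div_add_mod n N
    have hmod : n % N < N := Nat.mod_lt n hN
    have hNm : N * m = N * (n / N) + N := by rw [hm, Nat.mul_succ]
    have key : j + n = N * m := by omega
    have hMm : M ≤ m := by
      have : M ≤ n / N := (Nat.le_div_iff_mul_le hN).mpr (by rw [Nat.mul_comm]; exact hn2)
      omega
    refine ⟨(m, g n), hMm, ?_⟩
    have hDval : D m (g n) = edist (f^[j] (g n • f^[n] x)) (f^[j] (g n • f^[n] y)) := by
      rw [hDit, ← key, Function.iterate_add_apply, Function.iterate_add_apply,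
        iter_eqv f heq, iter_eqv f heq]
    rw [hDval]
    exact hδ' j (by omega) _ _ hn1
  -- big values
  have big : ∃ δ : ℝ≥0∞, 0 < δ ∧ ∀ M : ℕ, ∃ p : ℕ × G, M ≤ p.1 ∧ δ ≤ D p.1 p.2 := by
    obtain ⟨c, hc0, hcs⟩ := exists_between hls
    obtain ⟨δ, hδ0, hδ⟩ := uc_iter f hf N hc0
    refine ⟨δ, hδ0, fun M => ?_⟩
    have hfreq : ∃ᶠ n in atTop,
        c < edist (g n • f^[n] x) (g n • f^[n] y) :=
      frequently_lt_of_lt_limsup (by isBoundedDefault) hcs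
    obtain ⟨n, hn1, hn2⟩ := (hfreq.and_eventually (eventually_ge_atTop (N * M))).exists
    set m := n / N with hm
    set r := n % N with hr
    have hdm : r + N * m = n := Nat.mod_add_div n N
    have hmod : r < N := Nat.mod_lt n hN
    have hMm : M ≤ m := (Nat.le_div_iff_mul_le hN).mpr (by rw [Nat.mul_comm]; exact hn2)
    refine ⟨(m, g n), hMm, ?_⟩
    by_contra hcon
    push_neg at hcon
    have : edist (g n • f^[n] x) (g n • f^[n] y) < c := by
      have hval : edist (g n • f^[n] x) (g n • f^[n] y)
          = edist (f^[r] (g n • f^[N*m] x)) (f^[r] (g n • f^[N*m] y)) := by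
        rw [← hdm, Function.iterate_add_apply, Function.iterate_add_apply,
          iter_eqv f heq, iter_eqv f heq]
      rw [hval]
      exact hδ r (le_of_lt hmod) _ _ (by rw [← hDit]; exact hcon)
    exact absurd hn1 (not_lt.mpr this.le)
  obtain ⟨δ, hδ0, hbig⟩ := big
  choose sc hsc1 hsc2 using small
  choose bc hbc1 hbc2 using hbig
  obtain ⟨T, hT0, hTs⟩ : ∃ T : ℕ → ℕ × G, T 0 = sc 0 0 ∧
      ∀ k, T (k+1) = (if Even (k+1) then sc (k+1) ((T k).1 + 1) else bc ((T k).1 + 1)) :=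
    ⟨fun k => Nat.rec (sc 0 0)
      (fun k ih => if Even (k+1) then sc (k+1) (ih.1 + 1) else bc (ih.1 + 1)) k,
      rfl, fun k => rfl⟩
  have hmono : StrictMono fun k => (T k).1 := by
    apply strictMono_nat_of_lt_succ
    intro k
    rw [hTs]
    split_ifs
    · exact lt_of_lt_of_le (Nat.lt_succ_self _) (hsc1 _ _)
    · exact lt_of_lt_of_le (Nat.lt_succ_self _) (hbc1 _)
  have hidge : ∀ k, k ≤ (T k).1 := fun k => hmono.le_apply
  have heven : ∀ k, Even k → D (T k).1 (T k).2 < ((k : ℝ≥0∞) + 1)⁻¹ := by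
    intro k hk
    cases k with
    | zero => rw [hT0]; simpa using hsc2 0 0
    | succ k => rw [hTs, if_pos hk]; exact hsc2 _ _
  have hodd : ∀ k, ¬ Even k → δ ≤ D (T k).1 (T k).2 := by
    intro k hk
    cases k with
    | zero => exact absurd (Even.zero) hk
    | succ k => rw [hTs, if_neg hk]; exact hbc2 _
  set h : ℕ → G := fun m =>
    if hm : ∃ k, (T k).1 = m then (T (Classical.choose hm)).2 else 1 with hhdef
  have hh : ∀ k, h ((T k).1) = (T k).2 := by
    intro k
    have hex : ∃ k', (T k').1 = (T k).1 := ⟨k, rfl⟩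
    rw [hhdef]
    simp only
    rw [dif_pos hex]
    have := Classical.choose_spec hex
    have : Classical.choose hex = k := hmono.injective this
    rw [this]
  refine ⟨h, ?_, ?_⟩
  · -- liminf = 0
    refine le_antisymm ?_ (zero_le)
    refine ENNReal.le_of_forall_pos_le_add fun ε hε _ => ?_
    rw [zero_add]
    refine liminf_le_of_frequently_le ?_ (by isBoundedDefault)
    rw [frequently_atTop]
    intro M
    obtain ⟨j₀, hj₀⟩ := ENNReal.exists_inv_nat_lt
      (by exact_mod_cast hε.ne' : (ε : ℝ≥0∞) ≠ 0)
    set k := max j₀ M with hk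
    refine ⟨(T (2*k)).1, le_trans (by omega) (hidge (2*k)), ?_⟩
    have hval : edist (h (T (2*k)).1 • (f^[N])^[(T (2*k)).1] x)
        (h (T (2*k)).1 • (f^[N])^[(T (2*k)).1] y) = D (T (2*k)).1 (T (2*k)).2 := by
      rw [hD, hh]
    rw [hval]
    have h1 : D (T (2*k)).1 (T (2*k)).2 < (((2*k : ℕ) : ℝ≥0∞) + 1)⁻¹ :=
      heven (2*k) (even_two_mul k)
    have h2 : (((2*k : ℕ) : ℝ≥0∞) + 1)⁻¹ ≤ ((j₀ : ℕ) : ℝ≥0∞)⁻¹ := by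
      apply ENNReal.inv_le_inv.mpr
      have : (j₀ : ℕ) ≤ 2*k + 1 := by omega
      calc ((j₀ : ℕ) : ℝ≥0∞) ≤ ((2*k+1 : ℕ) : ℝ≥0∞) := by exact_mod_cast this
        _ = ((2*k : ℕ) : ℝ≥0∞) + 1 := by push_cast; ring
    exact le_of_lt (lt_of_lt_of_le h1 (le_trans h2 hj₀.le))
  · -- limsup > 0
    refine lt_of_lt_of_le hδ0 (le_limsup_of_frequently_le ?_ (by isBoundedDefault))
    rw [frequently_atTop]
    intro M
    refine ⟨(T (2*M+1)).1, le_trans (by omega) (hidge (2*M+1)), ?_⟩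
    have hval : edist (h (T (2*M+1)).1 • (f^[N])^[(T (2*M+1)).1] x)
        (h (T (2*M+1)).1 • (f^[N])^[(T (2*M+1)).1] y) = D (T (2*M+1)).1 (T (2*M+1)).2 := by
      rw [hD, hh]
    rw [hval]
    exact hodd (2*M+1) (by simp [Nat.even_add_one, parity_simps])

end Aux


/-- For a continuous equivariant map `f` on a compact metric G-space, `f` is chaotic in the
sense of G-Li-Yorke iff every iterate `f^N` (`N ≥ 1`) is chaotic in the sense of G-Li-Yorke. -/
theorem gLiYorkeChaotic_iff_forall_iterate
    {X G : Type*} [MetricSpace X] [CompactSpace X]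
    [Group G] [TopologicalSpace G] [IsTopologicalGroup G]
    [MulAction G X] [ContinuousSMul G X]
    (f : X → X) (hf : Continuous f)
    (heq : ∀ (g : G) (x : X), f (g • x) = g • f x) :
    GLiYorkeChaotic G f ↔ ∀ N : ℕ, 0 < N → GLiYorkeChaotic G (f^[N]) := by
  constructor
  · rintro ⟨S, hS, hpairs⟩ N hN
    exact ⟨S, hS, fun a ha b hb hab =>
      pair_transfer f hf heq N hN a b (hpairs a ha b hb hab)⟩
  · intro hall
    have h1 := hall 1 one_pos
    rwa [Function.iterate_one] at h1
end

section
/- Let (X,d) be a metric G-space and f : X → X a continuous equivariant map. Let (n_i)_{i≥0} be a sequence of positive integers, and let (A_i)_{i≥0} and (B_i)_{i≥0} be decreasing sequences of nonempty compact subsets of X with ⋂_{i≥0} A_i = {a} and ⋂_{i≥0} B_i = {b}, where a, b ∈ X and a ≠ b. If for every i ≥ 0 there exists g_{n_i} ∈ G such that A_{i+1} ∪ B_{i+1} ⊆ g_{n_i}·f^{n_i}(A_i) ∩ g_{n_i}·f^{n_i}(B_i), then f is chaotic in the sense of G-Li-Yorke. -/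
open Filter Topology

/-! ### Auxiliary material -/

theorem gly_not_countable : ¬ Countable (ℕ → Bool) := by
  intro h
  have e : Set ℕ ≃ (ℕ → Bool) := Equiv.arrowCongr (Equiv.refl ℕ) Equiv.propEquivBool
  have : Countable (Set ℕ) := Countable.of_equiv _ e.symm
  obtain ⟨F, hF⟩ := this.exists_injective_nat
  exact Function.cantor_injective F hF

/-- Finite compositions of a sequence of maps. -/
def glyComps {X : Type*} (φ : ℕ → X → X) : ℕ → X → X
  | 0 => id
  | k + 1 => φ k ∘ glyComps φ k

theorem glyComps_succ {X : Type*} (φ : ℕ → X → X) (k : ℕ) (x : X) :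
    glyComps φ (k + 1) x = φ k (glyComps φ k x) := rfl

/-- Existence of a point whose partial orbit follows a prescribed sequence of compact sets. -/
theorem glyExistsPoint {X : Type*} [MetricSpace X] (φ : ℕ → X → X) (hφ : ∀ i, Continuous (φ i))
    (D : ℕ → Set X) (hcpt : ∀ k, IsCompact (D k)) (hne : ∀ k, (D k).Nonempty)
    (hsub : ∀ k, D (k + 1) ⊆ φ k '' D k) :
    ∃ x : X, ∀ k, glyComps φ k x ∈ D k := by
  have hc : ∀ k, Continuous (glyComps φ k) := by
    intro k
    induction k with
    | zero => exact continuous_id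
    | succ k ih => exact (hφ k).comp ih
  have hpull : ∀ k, ∀ z ∈ D k, ∃ x, glyComps φ k x = z ∧ ∀ j ≤ k, glyComps φ j x ∈ D j := by
    intro k
    induction k with
    | zero =>
      intro z hz
      refine ⟨z, rfl, fun j hj => ?_⟩
      have hj0 : j = 0 := Nat.le_zero.mp hj
      subst hj0
      exact hz
    | succ k ih =>
      intro z hz
      obtain ⟨y, hy, hyz⟩ := hsub k hz
      obtain ⟨x, hxk, hxj⟩ := ih y hy
      refine ⟨x, ?_, fun j hj => ?_⟩
      · rw [glyComps_succ, hxk]; exact hyz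
      · by_cases hj' : j ≤ k
        · exact hxj j hj'
        · have hjk : j = k + 1 := by omega
          subst hjk
          have : glyComps φ (k + 1) x = z := by rw [glyComps_succ, hxk]; exact hyz
          rw [this]; exact hz
  set E : ℕ → Set X := fun k => ⋂ j, ⋂ _ : j ≤ k, glyComps φ j ⁻¹' D j with hE
  have hEcl : ∀ k, IsClosed (E k) := fun k =>
    isClosed_iInter fun j => isClosed_iInter fun _ => (hcpt j).isClosed.preimage (hc j)
  have hEsub : ∀ k, E k ⊆ D 0 := fun k x hx => Set.mem_iInter₂.mp hx 0 (Nat.zero_le k)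
  have hEdec : ∀ k, E (k + 1) ⊆ E k := fun k x hx =>
    Set.mem_iInter₂.mpr fun j hj => Set.mem_iInter₂.mp hx j (hj.trans (Nat.le_succ k))
  have hEne : ∀ k, (E k).Nonempty := by
    intro k
    obtain ⟨z, hz⟩ := hne k
    obtain ⟨x, _, hx⟩ := hpull k z hz
    exact ⟨x, Set.mem_iInter₂.mpr fun j hj => hx j hj⟩
  obtain ⟨x, hx⟩ := IsCompact.nonempty_iInter_of_sequence_nonempty_isCompact_isClosed E hEdec
    hEne ((hcpt 0).of_isClosed_subset (hEcl 0) (hEsub 0)) hEcl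
  exact ⟨x, fun k => Set.mem_iInter₂.mp (Set.mem_iInter.mp hx k) k le_rfl⟩

/-- Points of a decreasing sequence of compact sets with intersection `{c}` eventually
come uniformly close to `c`. -/
theorem glyShrink {X : Type*} [MetricSpace X] (C : ℕ → Set X) (c : X)
    (hcpt : ∀ i, IsCompact (C i)) (hdec : ∀ i, C (i + 1) ⊆ C i) (hC : ⋂ i, C i = {c}) :
    ∀ ε : ℝ, 0 < ε → ∃ K, ∀ k, K ≤ k → ∀ p ∈ C k, dist p c < ε := by
  intro ε hε
  have hmono : Antitone C := antitone_nat_of_succ_le hdec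
  by_contra h
  push_neg at h
  have hcl' : IsClosed {p : X | ε ≤ dist p c} :=
    isClosed_le continuous_const (Continuous.dist continuous_id continuous_const)
  set S : ℕ → Set X := fun k => C k ∩ {p | ε ≤ dist p c} with hS
  have hclosed : ∀ k, IsClosed (S k) := fun k => (hcpt k).isClosed.inter hcl'
  have hSne : ∀ K, (S K).Nonempty := by
    intro K
    obtain ⟨k, hkK, p, hp, hdp⟩ := h K
    exact ⟨p, hmono hkK hp, hdp⟩
  have hSdec : ∀ k, S (k + 1) ⊆ S k := fun k => Set.inter_subset_inter_left _ (hdec k)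
  obtain ⟨q, hq⟩ := IsCompact.nonempty_iInter_of_sequence_nonempty_isCompact_isClosed S hSdec
    hSne ((hcpt 0).inter_right hcl') hclosed
  have hq1 : q ∈ ⋂ i, C i := Set.mem_iInter.mpr fun i => (Set.mem_iInter.mp hq i).1
  rw [hC] at hq1
  have hq2 : ε ≤ dist q c := (Set.mem_iInter.mp hq 0).2
  rw [Set.mem_singleton_iff.mp hq1] at hq2
  simp at hq2
  linarith

/-- The coding function used to build an uncountable scrambled set. -/
def glyEnc (r : ℕ → Bool) (k : ℕ) : Bool :=
  if padicValNat 2 (k + 1) = 0 then false else r (padicValNat 2 (k + 1) - 1)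

theorem glyEnc_even (r : ℕ → Bool) (j : ℕ) : glyEnc r (2 * j) = false := by
  rw [glyEnc, if_pos (padicValNat.eq_zero_of_not_dvd (by omega))]

theorem glyEnc_spec (r : ℕ → Bool) (m t : ℕ) :
    glyEnc r (2 ^ (m + 1) * (2 * t + 1) - 1) = r m := by
  have hpos : 0 < 2 ^ (m + 1) * (2 * t + 1) := by positivity
  have h1 : 2 ^ (m + 1) * (2 * t + 1) - 1 + 1 = 2 ^ (m + 1) * (2 * t + 1) := by omega
  have hval : padicValNat 2 (2 ^ (m + 1) * (2 * t + 1)) = m + 1 := by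
    rw [padicValNat.mul (by positivity) (by omega), padicValNat.prime_pow,
      padicValNat.eq_zero_of_not_dvd (by omega)]
  rw [glyEnc, h1, hval]
  simp

theorem glyEnc_le (m t : ℕ) : t ≤ 2 ^ (m + 1) * (2 * t + 1) - 1 := by
  have hp : 1 ≤ 2 ^ m := Nat.one_le_two_pow
  have h2 : 2 ≤ 2 ^ (m + 1) := by rw [pow_succ]; omega
  have h3 : 2 * (2 * t + 1) ≤ 2 ^ (m + 1) * (2 * t + 1) := Nat.mul_le_mul_right _ h2
  omega

/-- A sufficient condition for G-Li-Yorke chaos: if there are decreasing sequences of nonempty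
compact sets `Aᵢ`, `Bᵢ` shrinking to two distinct points `a ≠ b`, a sequence of positive
integers `nᵢ` and group elements `g_{nᵢ}` with
`A_{i+1} ∪ B_{i+1} ⊆ g_{nᵢ}·f^{nᵢ}(Aᵢ) ∩ g_{nᵢ}·f^{nᵢ}(Bᵢ)`, then the continuous
equivariant map `f` is chaotic in the sense of G-Li-Yorke. -/
theorem gLiYorkeChaotic_of_nested_compacts
    {X G : Type*} [MetricSpace X]
    [Group G] [TopologicalSpace G] [IsTopologicalGroup G]
    [MulAction G X] [ContinuousSMul G X]
    (f : X → X) (hf : Continuous f)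
    (heq : ∀ (g : G) (x : X), f (g • x) = g • f x)
    (n : ℕ → ℕ) (hn : ∀ i, 0 < n i)
    (A B : ℕ → Set X)
    (hAcpt : ∀ i, IsCompact (A i)) (hBcpt : ∀ i, IsCompact (B i))
    (hAne : ∀ i, (A i).Nonempty) (hBne : ∀ i, (B i).Nonempty)
    (hAdec : ∀ i, A (i + 1) ⊆ A i) (hBdec : ∀ i, B (i + 1) ⊆ B i)
    (a b : X) (hab : a ≠ b)
    (hAa : ⋂ i, A i = {a}) (hBb : ⋂ i, B i = {b})
    (hstep : ∀ i, ∃ g : G,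
      A (i + 1) ∪ B (i + 1) ⊆
        ((fun x => g • f^[n i] x) '' A i) ∩ ((fun x => g • f^[n i] x) '' B i)) :
    GLiYorkeChaotic G f := by
  classical
  choose g hg using hstep
  -- equivariance for iterates
  have hiter : ∀ (m : ℕ) (u : G) (x : X), f^[m] (u • x) = u • f^[m] x := by
    intro m
    induction m with
    | zero => intro u x; simp
    | succ m ih => intro u x; rw [Function.iterate_succ_apply, heq, ih, Function.iterate_succ_apply]
  -- the maps and their compositions
  obtain ⟨φ, hφdef⟩ : ∃ φ : ℕ → X → X, ∀ i, φ i = fun x => g i • f^[n i] x := ⟨_, fun i => rfl⟩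
  have hφc : ∀ i, Continuous (φ i) := by
    intro i
    rw [hφdef]
    exact (hf.iterate (n i)).const_smul (g i)
  obtain ⟨N, hN0, hNsucc⟩ : ∃ N : ℕ → ℕ, N 0 = 0 ∧ ∀ k, N (k + 1) = N k + n k :=
    ⟨fun k => ∑ i ∈ Finset.range k, n i, by simp, fun k => Finset.sum_range_succ _ _⟩
  have hNmono : StrictMono N := strictMono_nat_of_lt_succ fun k => by
    have := hn k; rw [hNsucc]; omega
  have hNge : ∀ k, k ≤ N k := fun k => hNmono.le_apply
  -- representation of compositions as `u • f^[N k]`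
  have hrep : ∀ k, ∃ u : G, ∀ x, glyComps φ k x = u • f^[N k] x := by
    intro k
    induction k with
    | zero =>
      refine ⟨1, fun x => ?_⟩
      rw [hN0]
      simp [glyComps]
    | succ k ih =>
      obtain ⟨u, hu⟩ := ih
      refine ⟨g k * u, fun x => ?_⟩
      calc glyComps φ (k + 1) x = φ k (glyComps φ k x) := rfl
        _ = g k • f^[n k] (glyComps φ k x) := by rw [hφdef]
        _ = g k • f^[n k] (u • f^[N k] x) := by rw [hu]
        _ = g k • (u • f^[n k] (f^[N k] x)) := by rw [hiter]
        _ = (g k * u) • f^[n k] (f^[N k] x) := (mul_smul _ _ _).symm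
        _ = (g k * u) • f^[N (k + 1)] x := by
            rw [← Function.iterate_add_apply, hNsucc k, Nat.add_comm (N k) (n k)]
  choose Gk hGk using hrep
  -- points following prescribed itineraries
  have hxs' : ∀ s : ℕ → Bool, ∃ x : X, ∀ k, glyComps φ k x ∈ (bif s k then B k else A k) := by
    intro s
    apply glyExistsPoint φ hφc (fun k => bif s k then B k else A k)
    · intro k; cases s k
      · simpa using hAcpt k
      · simpa using hBcpt k
    · intro k; cases s k
      · simpa using hAne k
      · simpa using hBne k
    · intro k p hp
      have hp' : p ∈ A (k + 1) ∪ B (k + 1) := by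
        cases hsk : s (k + 1)
        · rw [hsk] at hp; exact Or.inl (by simpa using hp)
        · rw [hsk] at hp; exact Or.inr (by simpa using hp)
      have h2 := hg k hp'
      cases hsk2 : s k
      · simpa [hφdef k] using h2.1
      · simpa [hφdef k] using h2.2
  choose xs hxs using hxs'
  -- shrinking of A and B
  have hAsh := glyShrink A a hAcpt hAdec hAa
  have hBsh := glyShrink B b hBcpt hBdec hBb
  set δ : ℝ := dist a b with hδdef
  have hδ : 0 < δ := dist_pos.mpr hab
  obtain ⟨KA, hKA⟩ := hAsh (δ / 3) (by positivity)
  obtain ⟨KB, hKB⟩ := hBsh (δ / 3) (by positivity)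
  have hfar : ∀ k, KA ≤ k → KB ≤ k → ∀ p ∈ A k, ∀ q ∈ B k, δ / 3 ≤ dist p q := by
    intro k h1 h2 p hp q hq
    have d1 := hKA k h1 p hp
    have d2 := hKB k h2 q hq
    have ht := dist_triangle4 a p q b
    have e1 : dist a p = dist p a := dist_comm _ _
    linarith
  -- the key pair lemma
  have hpair : ∀ x y : X,
      (∀ m, ∃ k, m ≤ k ∧ glyComps φ k x ∈ A k ∧ glyComps φ k y ∈ A k) →
      (∀ m, ∃ k, m ≤ k ∧ ((glyComps φ k x ∈ A k ∧ glyComps φ k y ∈ B k) ∨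
        (glyComps φ k x ∈ B k ∧ glyComps φ k y ∈ A k))) →
      GLiYorkePair G f x y := by
    intro x y hnear hfarxy
    have hterm : ∀ (z : X) (k : ℕ),
        (if h : ∃ k', N k' = N k then Gk (Nat.find h) else (1 : G)) • f^[N k] z =
          glyComps φ k z := by
      intro z k
      have hex : ∃ k', N k' = N k := ⟨k, rfl⟩
      rw [dif_pos hex, hNmono.injective (Nat.find_spec hex), ← hGk]
    refine ⟨fun m => if h : ∃ k', N k' = m then Gk (Nat.find h) else 1, ?_, ?_⟩
    · refine le_antisymm ?_ (zero_le (a := _))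
      refine ENNReal.le_of_forall_pos_le_add fun ε hε _ => ?_
      rw [zero_add]
      refine liminf_le_of_frequently_le' ?_
      rw [Filter.frequently_atTop]
      intro m
      obtain ⟨K, hK⟩ := hAsh ((ε : ℝ) / 2) (half_pos (NNReal.coe_pos.mpr hε))
      obtain ⟨k, hk, hxA, hyA⟩ := hnear (max m K)
      refine ⟨N k, le_trans (le_trans (le_max_left m K) hk) (hNge k), ?_⟩
      show edist ((if h : ∃ k', N k' = N k then Gk (Nat.find h) else (1 : G)) • f^[N k] x)
        ((if h : ∃ k', N k' = N k then Gk (Nat.find h) else (1 : G)) • f^[N k] y) ≤ (ε : ENNReal)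
      rw [hterm, hterm, edist_dist]
      have d1 := hK k (le_trans (le_max_right m K) hk) _ hxA
      have d2 := hK k (le_trans (le_max_right m K) hk) _ hyA
      have hd : dist (glyComps φ k x) (glyComps φ k y) ≤ (ε : ℝ) := by
        have ht := dist_triangle (glyComps φ k x) a (glyComps φ k y)
        have e2 : dist a (glyComps φ k y) = dist (glyComps φ k y) a := dist_comm _ _
        linarith
      calc ENNReal.ofReal (dist (glyComps φ k x) (glyComps φ k y))
          ≤ ENNReal.ofReal (ε : ℝ) := ENNReal.ofReal_le_ofReal hd
        _ = (ε : ENNReal) := ENNReal.ofReal_coe_nnreal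
    · have hpos : (0 : ENNReal) < ENNReal.ofReal (δ / 3) := ENNReal.ofReal_pos.mpr (by positivity)
      refine lt_of_lt_of_le hpos (le_limsup_of_frequently_le' ?_)
      rw [Filter.frequently_atTop]
      intro m
      obtain ⟨k, hk, hcase⟩ := hfarxy (max m (max KA KB))
      refine ⟨N k, le_trans (le_trans (le_max_left _ _) hk) (hNge k), ?_⟩
      show ENNReal.ofReal (δ / 3) ≤
        edist ((if h : ∃ k', N k' = N k then Gk (Nat.find h) else (1 : G)) • f^[N k] x)
          ((if h : ∃ k', N k' = N k then Gk (Nat.find h) else (1 : G)) • f^[N k] y)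
      rw [hterm, hterm, edist_dist]
      apply ENNReal.ofReal_le_ofReal
      have hKAk : KA ≤ k := le_trans (le_trans (le_max_left KA KB) (le_max_right m _)) hk
      have hKBk : KB ≤ k := le_trans (le_trans (le_max_right KA KB) (le_max_right m _)) hk
      rcases hcase with ⟨hx', hy'⟩ | ⟨hx', hy'⟩
      · exact hfar k hKAk hKBk _ hx' _ hy'
      · rw [dist_comm]; exact hfar k hKAk hKBk _ hy' _ hx'
  -- the scrambled set
  have hinj : Function.Injective (fun r : ℕ → Bool => xs (glyEnc r)) := by
    intro r r' hrr
    by_contra hne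
    obtain ⟨m, hm⟩ := Function.ne_iff.mp hne
    have hz : xs (glyEnc r) = xs (glyEnc r') := hrr
    have hkge : max KA KB ≤ 2 ^ (m + 1) * (2 * max KA KB + 1) - 1 := glyEnc_le m (max KA KB)
    have h1 := hxs (glyEnc r) (2 ^ (m + 1) * (2 * max KA KB + 1) - 1)
    have h2 := hxs (glyEnc r') (2 ^ (m + 1) * (2 * max KA KB + 1) - 1)
    rw [glyEnc_spec] at h1 h2
    rw [hz] at h1
    have hAB : ∃ z, z ∈ A (2 ^ (m + 1) * (2 * max KA KB + 1) - 1) ∧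
        z ∈ B (2 ^ (m + 1) * (2 * max KA KB + 1) - 1) := by
      cases hrm : r m
      · have hrm' : r' m = true := by
          cases h : r' m
          · exact absurd (hrm.trans h.symm) hm
          · rfl
        rw [hrm] at h1; rw [hrm'] at h2
        exact ⟨_, by simpa using h1, by simpa using h2⟩
      · have hrm' : r' m = false := by
          cases h : r' m
          · rfl
          · exact absurd (hrm.trans h.symm) hm
        rw [hrm] at h1; rw [hrm'] at h2
        exact ⟨_, by simpa using h2, by simpa using h1⟩
    obtain ⟨z, hzA, hzB⟩ := hAB
    have := hfar _ (le_trans (le_max_left KA KB) hkge) (le_trans (le_max_right KA KB) hkge)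
      z hzA z hzB
    simp at this
    linarith
  refine ⟨Set.range (fun r : ℕ → Bool => xs (glyEnc r)), ?_, ?_⟩
  · intro hc
    have h1 := hc.preimage hinj
    rw [Set.preimage_range] at h1
    exact gly_not_countable (Set.countable_univ_iff.mp h1)
  · rintro x ⟨r, rfl⟩ y ⟨r', rfl⟩ hxy
    apply hpair
    · intro m
      refine ⟨2 * m, by omega, ?_, ?_⟩
      · have h1 := hxs (glyEnc r) (2 * m)
        rw [glyEnc_even] at h1
        simpa using h1
      · have h1 := hxs (glyEnc r') (2 * m)
        rw [glyEnc_even] at h1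
        simpa using h1
    · intro m
      have hrne : r ≠ r' := fun h => hxy (by rw [h])
      obtain ⟨m₀, hm₀⟩ := Function.ne_iff.mp hrne
      refine ⟨2 ^ (m₀ + 1) * (2 * m + 1) - 1, glyEnc_le m₀ m, ?_⟩
      have h1 := hxs (glyEnc r) (2 ^ (m₀ + 1) * (2 * m + 1) - 1)
      have h2 := hxs (glyEnc r') (2 ^ (m₀ + 1) * (2 * m + 1) - 1)
      rw [glyEnc_spec] at h1 h2
      cases hrm : r m₀
      · have hrm' : r' m₀ = true := by
          cases h : r' m₀
          · exact absurd (hrm.trans h.symm) hm₀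
          · rfl
        rw [hrm] at h1; rw [hrm'] at h2
        exact Or.inl ⟨by simpa using h1, by simpa using h2⟩
      · have hrm' : r' m₀ = false := by
          cases h : r' m₀
          · rfl
          · exact absurd (hrm.trans h.symm) hm₀
        rw [hrm] at h1; rw [hrm'] at h2
        exact Or.inr ⟨by simpa using h1, by simpa using h2⟩
end

section
/- Let (X,d) be a metric G-space and f : X → X a continuous map. If the set R_G(f) of G-recurrent points of f is dense in X, then R_G(f) is a dense G_δ subset of X. -/
open Filter Topology

/-- `x` is a G-recurrent point of `f`: there exist a sequence `(gᵢ)` in `G` and a sequence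
`(nᵢ)` of positive integers with `gᵢ • f^[nᵢ] x → x`. -/
def GRecurrentPt (G : Type*) {X : Type*} [MetricSpace X] [Group G] [MulAction G X]
    (f : X → X) (x : X) : Prop :=
  ∃ (g : ℕ → G) (n : ℕ → ℕ), (∀ i, 0 < n i) ∧
    Tendsto (fun i => g i • f^[n i] x) atTop (𝓝 x)

lemma gRecurrentPt_iff {X G : Type*} [MetricSpace X] [Group G] [MulAction G X]
    (f : X → X) (x : X) :
    GRecurrentPt G f x ↔
      ∀ ε : ℝ, 0 < ε → ∃ n : ℕ, 0 < n ∧ ∃ g : G, dist (g • f^[n] x) x < ε := by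
  constructor
  · rintro ⟨g, n, hn, ht⟩ ε hε
    obtain ⟨i, hi⟩ := (Metric.tendsto_atTop.mp ht) ε hε
    exact ⟨n i, hn i, g i, hi i le_rfl⟩
  · intro h
    choose n hn g hg using fun i : ℕ => h (1 / (i + 1)) (by positivity)
    refine ⟨g, n, hn, Metric.tendsto_atTop.mpr ?_⟩
    intro ε hε
    obtain ⟨N, hN⟩ := exists_nat_one_div_lt hε
    refine ⟨N, fun i hi => lt_of_lt_of_le (hg i) ?_⟩
    calc (1 : ℝ) / (i + 1) ≤ 1 / (N + 1) := by
              apply one_div_le_one_div_of_le (by positivity)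
              exact_mod_cast Nat.succ_le_succ hi
      _ ≤ ε := hN.le

/-- If the set of G-recurrent points of a continuous map `f` on a metric G-space is dense,
then it is a dense Gδ set. -/
theorem gRecurrent_dense_Gdelta
    {X G : Type*} [MetricSpace X]
    [Group G] [TopologicalSpace G] [IsTopologicalGroup G]
    [MulAction G X] [ContinuousSMul G X]
    (f : X → X) (hf : Continuous f)
    (hdense : Dense {x : X | GRecurrentPt G f x}) :
    IsGδ {x : X | GRecurrentPt G f x} ∧ Dense {x : X | GRecurrentPt G f x} := by
  refine ⟨?_, hdense⟩
  have key : {x : X | GRecurrentPt G f x} =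
      ⋂ k : ℕ, ⋃ n : ℕ, ⋃ _ : 0 < n, ⋃ g : G,
        {x : X | dist (g • f^[n] x) x < 1 / (k + 1)} := by
    ext x
    simp only [Set.mem_setOf_eq, Set.mem_iInter, Set.mem_iUnion, gRecurrentPt_iff]
    constructor
    · intro h k
      obtain ⟨n, hn, g, hg⟩ := h (1 / (k + 1)) (by positivity)
      exact ⟨n, hn, g, hg⟩
    · intro h ε hε
      obtain ⟨k, hk⟩ := exists_nat_one_div_lt hε
      obtain ⟨n, hn, g, hg⟩ := h k
      exact ⟨n, hn, g, hg.trans hk⟩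
  rw [key]
  refine .iInter fun k => IsOpen.isGδ ?_
  refine isOpen_iUnion fun n => isOpen_iUnion fun _ => isOpen_iUnion fun g => ?_
  have : Continuous fun x : X => dist (g • f^[n] x) x :=
    ((continuous_const_smul g).comp (hf.iterate n)).dist continuous_id
  exact isOpen_lt this continuous_const
end
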